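/- For the 2D step set S = {(-1,0),(0,-1),(1,1)} (Kreweras model), the birational maps Φ_1: (x,y) ↦ (1/(xy), y) and Φ_2: (x,y) ↦ (x, 1/(xy)) generate a group of order 6 (isomorphic to S_3) under composition. -/

import Mathlib

abbrev K2 : Type := FractionRing (MvPolynomial (Fin 2) ℚ)

noncomputable def X2 (i : Fin 2) : K2 :=
  algebraMap (MvPolynomial (Fin 2) ℚ) K2 (MvPolynomial.X i)

namespace Krew
open MvPolynomial

abbrev R2 : Type := MvPolynomial (Fin 2) ℚ

noncomputable def emb : R2 →+* K2 := algebraMap R2 K2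

lemma emb_inj : Function.Injective emb := IsFractionRing.injective R2 K2

lemma X2_ne_zero (i : Fin 2) : X2 i ≠ 0 := by
  unfold X2
  intro h
  have := emb_inj (a₁ := X i) (a₂ := 0) (by simpa [emb] using h)
  exact X_ne_zero i this

lemma xy_ne : X2 0 * X2 1 ≠ 0 := mul_ne_zero (X2_ne_zero 0) (X2_ne_zero 1)

/-- exponent reindexing map -/
noncomputable def fN (N : ℕ) (μ : Fin 2 →₀ ℕ) : Fin 2 →₀ ℕ :=
  Finsupp.single 0 (if μ 0 ≤ N then N - μ 0 else N + 1 + μ 0) +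
  Finsupp.single 1 ((if μ 0 ≤ N then N - μ 0 else 0) + μ 1)

lemma fN_apply0 (N : ℕ) (μ : Fin 2 →₀ ℕ) :
    fN N μ 0 = if μ 0 ≤ N then N - μ 0 else N + 1 + μ 0 := by
  simp [fN, Finsupp.single_apply]

lemma fN_apply1 (N : ℕ) (μ : Fin 2 →₀ ℕ) :
    fN N μ 1 = (if μ 0 ≤ N then N - μ 0 else 0) + μ 1 := by
  simp [fN, Finsupp.single_apply]

lemma fN_inj (N : ℕ) : Function.Injective (fN N) := by
  intro μ ν h
  have h0 : fN N μ 0 = fN N ν 0 := by rw [h]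
  have h1 : fN N μ 1 = fN N ν 1 := by rw [h]
  rw [fN_apply0, fN_apply0] at h0
  rw [fN_apply1, fN_apply1] at h1
  have e0 : μ 0 = ν 0 := by split_ifs at h0 <;> omega
  have e1 : μ 1 = ν 1 := by
    rw [e0] at h1; split_ifs at h1 <;> omega
  ext a
  fin_cases a
  · exact e0
  · exact e1


lemma aeval_monomial_two (v : Fin 2 → K2) (μ : Fin 2 →₀ ℕ) (c : ℚ) :
    MvPolynomial.aeval v (monomial μ c) = algebraMap ℚ K2 c * v 0 ^ μ 0 * v 1 ^ μ 1 := by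
  rw [aeval_monomial]
  rw [Finsupp.prod_fintype _ _ (fun i => pow_zero _)]
  rw [Fin.prod_univ_two, mul_assoc]

lemma emb_eq_aeval (p : R2) :
    emb p = MvPolynomial.aeval (fun i => algebraMap R2 K2 (X i)) p := by
  have : (MvPolynomial.aeval (fun i => algebraMap R2 K2 (X i))) = (IsScalarTower.toAlgHom ℚ R2 K2) := by
    apply MvPolynomial.algHom_ext; intro i; simp
  rw [this]; rfl

lemma emb_monomial (μ : Fin 2 →₀ ℕ) (c : ℚ) :
    emb (monomial μ c) = algebraMap ℚ K2 c * X2 0 ^ μ 0 * X2 1 ^ μ 1 := by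
  rw [emb_eq_aeval, aeval_monomial_two]; rfl

/-- the substitution x ↦ (xy)⁻¹, y ↦ y as a map on polynomials -/
noncomputable def g1 : R2 →+* K2 :=
  (MvPolynomial.aeval ![(X2 0 * X2 1)⁻¹, X2 1] : R2 →ₐ[ℚ] K2).toRingHom

lemma g1_monomial (μ : Fin 2 →₀ ℕ) (c : ℚ) :
    g1 (monomial μ c) = algebraMap ℚ K2 c * ((X2 0 * X2 1)⁻¹) ^ μ 0 * X2 1 ^ μ 1 := by
  have := aeval_monomial_two ![(X2 0 * X2 1)⁻¹, X2 1] μ c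
  simpa [g1] using this

lemma key_monomial (N : ℕ) (μ : Fin 2 →₀ ℕ) (hμ : μ 0 ≤ N) (c : ℚ) :
    (X2 0 * X2 1) ^ N * g1 (monomial μ c) = emb (monomial (fN N μ) c) := by
  rw [g1_monomial, emb_monomial, fN_apply0, fN_apply1, if_pos hμ, if_pos hμ]
  have h1 : (X2 0 * X2 1) ^ N * ((X2 0 * X2 1)⁻¹) ^ μ 0 = (X2 0 * X2 1) ^ (N - μ 0) := by
    rw [inv_pow, pow_sub₀ _ xy_ne hμ]
  have h2 : X2 1 ^ (N - μ 0 + μ 1) = X2 1 ^ (N - μ 0) * X2 1 ^ μ 1 := pow_add _ _ _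
  calc (X2 0 * X2 1) ^ N * (algebraMap ℚ K2 c * ((X2 0 * X2 1)⁻¹) ^ μ 0 * X2 1 ^ μ 1)
      = algebraMap ℚ K2 c * ((X2 0 * X2 1) ^ N * ((X2 0 * X2 1)⁻¹) ^ μ 0) * X2 1 ^ μ 1 := by ring
    _ = algebraMap ℚ K2 c * (X2 0 * X2 1) ^ (N - μ 0) * X2 1 ^ μ 1 := by rw [h1]
    _ = algebraMap ℚ K2 c * X2 0 ^ (N - μ 0) * X2 1 ^ (N - μ 0 + μ 1) := by
        rw [mul_pow, h2]; ring

lemma g1_ne_zero {p : R2} (hp : p ≠ 0) : g1 p ≠ 0 := by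
  set N := p.degreeOf 0 with hN
  set q : R2 := ∑ μ ∈ p.support, monomial (fN N μ) (coeff μ p) with hqdef
  have hbound : ∀ μ ∈ p.support, μ 0 ≤ N := by
    intro μ h; rw [hN, degreeOf_eq_sup]; exact Finset.le_sup (f := fun m => m 0) h
  have hq : (X2 0 * X2 1) ^ N * g1 p = emb q := by
    conv_lhs => rw [p.as_sum]
    rw [map_sum, Finset.mul_sum, hqdef, map_sum]
    exact Finset.sum_congr rfl fun μ h => key_monomial N μ (hbound μ h) _
  have hq0 : q ≠ 0 := by
    obtain ⟨μ₀, hμ₀⟩ := MvPolynomial.support_nonempty.mpr hp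
    have hc : coeff (fN N μ₀) q = coeff μ₀ p := by
      rw [hqdef, MvPolynomial.coeff_sum]
      rw [Finset.sum_eq_single μ₀]
      · rw [coeff_monomial, if_pos rfl]
      · intro μ hμ hne
        rw [coeff_monomial, if_neg (fun h => hne (fN_inj N h))]
      · intro h; exact absurd hμ₀ h
    intro h
    rw [h] at hc
    simp only [coeff_zero] at hc
    exact (MvPolynomial.mem_support_iff.mp hμ₀) hc.symm
  intro h
  rw [h, mul_zero] at hq
  exact hq0 (emb_inj (by simpa [map_zero] using hq.symm))

lemma g1_inj : Function.Injective g1 := by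
  rw [injective_iff_map_eq_zero]
  intro p hp
  by_contra h
  exact g1_ne_zero h hp


/-- lifted substitution endomorphism of K2 -/
noncomputable def φh : K2 →+* K2 := IsFractionRing.lift (g := g1) g1_inj

lemma φh_X0 : φh (X2 0) = (X2 0 * X2 1)⁻¹ := by
  show φh (algebraMap R2 K2 (X 0)) = _
  unfold φh
  rw [IsFractionRing.lift_algebraMap]
  simp [g1]

lemma φh_X1 : φh (X2 1) = X2 1 := by
  show φh (algebraMap R2 K2 (X 1)) = _
  unfold φh
  rw [IsFractionRing.lift_algebraMap]
  simp [g1]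

noncomputable def gs : R2 →+* K2 :=
  emb.comp (MvPolynomial.rename (Equiv.swap (0 : Fin 2) 1)).toRingHom

lemma gs_inj : Function.Injective gs :=
  emb_inj.comp (MvPolynomial.rename_injective _ (Equiv.injective _))

noncomputable def Sh : K2 →+* K2 := IsFractionRing.lift (g := gs) gs_inj

lemma Sh_X0 : Sh (X2 0) = X2 1 := by
  show Sh (algebraMap R2 K2 (X 0)) = _
  unfold Sh
  rw [IsFractionRing.lift_algebraMap]
  simp [gs, emb]
  rfl

lemma Sh_X1 : Sh (X2 1) = X2 0 := by
  show Sh (algebraMap R2 K2 (X 1)) = _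
  unfold Sh
  rw [IsFractionRing.lift_algebraMap]
  simp [gs, emb]
  rfl

lemma hom_ext {f g : K2 →+* K2} (h0 : f (X2 0) = g (X2 0)) (h1 : f (X2 1) = g (X2 1)) :
    f = g := by
  apply IsLocalization.ringHom_ext (nonZeroDivisors R2)
  apply MvPolynomial.ringHom_ext'
  · exact Subsingleton.elim _ _
  · intro i
    fin_cases i
    · exact h0
    · exact h1

lemma inv_mul_y : ((X2 0 * X2 1)⁻¹ * X2 1)⁻¹ = X2 0 := by
  rw [mul_inv, inv_inv, mul_assoc, mul_inv_cancel₀ (X2_ne_zero 1), mul_one]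

lemma inv_mul_x : ((X2 0 * X2 1)⁻¹ * X2 0)⁻¹ = X2 1 := by
  rw [mul_inv, inv_inv, mul_comm (X2 0) (X2 1), mul_assoc,
    mul_inv_cancel₀ (X2_ne_zero 0), mul_one]

lemma φh_invol : φh.comp φh = RingHom.id K2 := by
  apply hom_ext
  · rw [RingHom.comp_apply, φh_X0, map_inv₀, map_mul, φh_X0, φh_X1, inv_mul_y, RingHom.id_apply]
  · rw [RingHom.comp_apply, φh_X1, φh_X1, RingHom.id_apply]

lemma Sh_invol : Sh.comp Sh = RingHom.id K2 := by
  apply hom_ext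
  · rw [RingHom.comp_apply, Sh_X0, Sh_X1, RingHom.id_apply]
  · rw [RingHom.comp_apply, Sh_X1, Sh_X0, RingHom.id_apply]

noncomputable def φ1 : RingAut K2 := RingEquiv.ofRingHom φh φh φh_invol φh_invol
noncomputable def S : RingAut K2 := RingEquiv.ofRingHom Sh Sh Sh_invol Sh_invol

lemma mul_apply (f g : RingAut K2) (a : K2) : (f * g) a = f (g a) := rfl
lemma one_apply (a : K2) : (1 : RingAut K2) a = a := rfl

lemma aut_ext {f g : RingAut K2} (h0 : f (X2 0) = g (X2 0)) (h1 : f (X2 1) = g (X2 1)) :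
    f = g := by
  have h := hom_ext (f := (f : K2 →+* K2)) (g := (g : K2 →+* K2)) h0 h1
  exact RingEquiv.ext fun a => RingHom.congr_fun h a

lemma vφ0 : φ1 (X2 0) = (X2 0 * X2 1)⁻¹ := φh_X0
lemma vφ1 : φ1 (X2 1) = X2 1 := φh_X1
lemma vS0 : S (X2 0) = X2 1 := Sh_X0
lemma vS1 : S (X2 1) = X2 0 := Sh_X1

noncomputable def rot : RingAut K2 := S * φ1

lemma vρ0 : rot (X2 0) = (X2 0 * X2 1)⁻¹ := by
  rw [rot, mul_apply, vφ0, map_inv₀, map_mul, vS0, vS1, mul_comm]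

lemma vρ1 : rot (X2 1) = X2 0 := by
  rw [rot, mul_apply, vφ1, vS1]

lemma vρinv : rot ((X2 0 * X2 1)⁻¹) = X2 1 := by
  rw [map_inv₀, map_mul, vρ0, vρ1, inv_mul_x]

lemma vφinv : φ1 ((X2 0 * X2 1)⁻¹) = X2 0 := by
  rw [map_inv₀, map_mul, vφ0, vφ1, inv_mul_y]

noncomputable def φ2 : RingAut K2 := φ1 * rot

lemma vφ2_0 : φ2 (X2 0) = X2 0 := by rw [φ2, mul_apply, vρ0, vφinv]
lemma vφ2_1 : φ2 (X2 1) = (X2 0 * X2 1)⁻¹ := by rw [φ2, mul_apply, vρ1, vφ0]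

lemma hφφ : φ1 * φ1 = 1 := by
  apply aut_ext
  · rw [mul_apply, vφ0, vφinv, one_apply]
  · rw [mul_apply, vφ1, vφ1, one_apply]

lemma hρ3 : rot ^ 3 = 1 := by
  have h : rot ^ 3 = rot * (rot * rot) := by
    rw [pow_succ', pow_succ', pow_one]
  rw [h]
  apply aut_ext
  · rw [mul_apply, mul_apply, vρ0, vρinv, vρ1, one_apply]
  · rw [mul_apply, mul_apply, vρ1, vρ0, vρinv, one_apply]

lemma hconj : rot * φ1 = φ1 * (rot * rot) := by
  apply aut_ext
  · rw [mul_apply, vφ0, vρinv, mul_apply, mul_apply, vρ0, vρinv, vφ1]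
  · rw [mul_apply, vφ1, vρ1, mul_apply, mul_apply, vρ1, vρ0, vφinv]


lemma fact_xy : X2 0 ≠ X2 1 := by
  intro h
  have h2 := emb_inj (a₁ := X 0) (a₂ := X 1) h
  exact absurd (MvPolynomial.X_injective h2) (by decide)

lemma fact_x : (X2 0 * X2 1)⁻¹ ≠ X2 0 := by
  intro h
  have h1 : (1 : K2) = emb (X 0 * (X 0 * X 1)) := by
    rw [map_mul, map_mul]
    calc (1:K2) = (X2 0 * X2 1)⁻¹ * (X2 0 * X2 1) := (inv_mul_cancel₀ xy_ne).symm
    _ = X2 0 * (X2 0 * X2 1) := by rw [h]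
    _ = emb (X 0) * (emb (X 0) * emb (X 1)) := rfl
  have h2 : (1 : R2) = X 0 * (X 0 * X 1) := emb_inj (by rw [← h1, map_one])
  have h3 := congrArg constantCoeff h2
  simp at h3

lemma fact_y : (X2 0 * X2 1)⁻¹ ≠ X2 1 := by
  intro h
  have h1 : (1 : K2) = emb (X 1 * (X 0 * X 1)) := by
    rw [map_mul, map_mul]
    calc (1:K2) = (X2 0 * X2 1)⁻¹ * (X2 0 * X2 1) := (inv_mul_cancel₀ xy_ne).symm
    _ = X2 1 * (X2 0 * X2 1) := by rw [h]
    _ = emb (X 1) * (emb (X 0) * emb (X 1)) := rfl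
  have h2 : (1 : R2) = X 1 * (X 0 * X 1) := emb_inj (by rw [← h1, map_one])
  have h3 := congrArg constantCoeff h2
  simp at h3

lemma ne1_rot : rot ≠ 1 := by
  intro h
  exact fact_x (by rw [← vρ0, h, one_apply])

lemma ne1_rot2 : rot * rot ≠ 1 := by
  intro h
  have : X2 1 = X2 0 := by
    calc X2 1 = rot ((X2 0 * X2 1)⁻¹) := vρinv.symm
    _ = rot (rot (X2 0)) := by rw [vρ0]
    _ = (rot * rot) (X2 0) := rfl
    _ = X2 0 := by rw [h, one_apply]
  exact fact_xy this.symm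

lemma ne1_φ1 : φ1 ≠ 1 := by
  intro h
  exact fact_x (by rw [← vφ0, h, one_apply])

lemma ne1_φ1rot : φ1 * rot ≠ 1 := by
  intro h
  have : (X2 0 * X2 1)⁻¹ = X2 1 := by
    calc (X2 0 * X2 1)⁻¹ = φ1 (rot (X2 1)) := by rw [vρ1, vφ0]
    _ = (φ1 * rot) (X2 1) := rfl
    _ = X2 1 := by rw [h, one_apply]
  exact fact_y this

lemma ne1_φ1rot2 : φ1 * (rot * rot) ≠ 1 := by
  intro h
  have : X2 1 = X2 0 := by
    calc X2 1 = φ1 (rot (rot (X2 0))) := by rw [vρ0, vρinv, vφ1]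
    _ = (φ1 * (rot * rot)) (X2 0) := rfl
    _ = X2 0 := by rw [h, one_apply]
  exact fact_xy this.symm

lemma conj_pow (n : ℕ) : rot ^ n * φ1 = φ1 * rot ^ (2 * n) := by
  induction n with
  | zero => simp
  | succ k ih =>
    have h1 : rot ^ (k+1) * φ1 = rot ^ k * (rot * φ1) := by rw [pow_succ, mul_assoc]
    rw [h1, hconj, ← mul_assoc, ih, mul_assoc, ← mul_assoc (rot ^ (2*k)), ← pow_succ, ← pow_succ]
    have h2 : 2*k+1+1 = 2*(k+1) := by omega
    rw [h2]

lemma rot_pow_mod (a : ℕ) : rot ^ a = rot ^ (a % 3) := by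
  conv_lhs => rw [← Nat.div_add_mod a 3]
  rw [pow_add, pow_mul, hρ3, one_pow, one_mul]

lemma rot_eq_of {a b : ℕ} (h : (a : ZMod 3) = (b : ZMod 3)) : rot ^ a = rot ^ b := by
  rw [rot_pow_mod a, rot_pow_mod b]
  congr 1
  exact (ZMod.natCast_eq_natCast_iff a b 3).mp h

noncomputable def π : DihedralGroup 3 →* RingAut K2 :=
  MonoidHom.mk' (fun d => match d with
    | DihedralGroup.r i => rot ^ i.val
    | DihedralGroup.sr i => φ1 * rot ^ i.val) (by
      rintro (i | i) (j | j)
      · rw [DihedralGroup.r_mul_r]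
        show rot ^ (i + j).val = rot ^ i.val * rot ^ j.val
        rw [← pow_add]
        exact rot_eq_of (by push_cast [ZMod.natCast_val, ZMod.cast_id]; ring)
      · rw [DihedralGroup.r_mul_sr]
        show φ1 * rot ^ (j - i).val = rot ^ i.val * (φ1 * rot ^ j.val)
        rw [← mul_assoc, conj_pow, mul_assoc, ← pow_add]
        refine congrArg _ (rot_eq_of ?_)
        push_cast [ZMod.natCast_val, ZMod.cast_id]
        have h30 : (3 : ZMod 3) = 0 := by decide
        linear_combination (-i) * h30
      · rw [DihedralGroup.sr_mul_r]
        show φ1 * rot ^ (i + j).val = (φ1 * rot ^ i.val) * rot ^ j.val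
        rw [mul_assoc, ← pow_add]
        refine congrArg _ (rot_eq_of ?_)
        push_cast [ZMod.natCast_val, ZMod.cast_id]
        ring
      · rw [DihedralGroup.sr_mul_sr]
        show rot ^ (j - i).val = (φ1 * rot ^ i.val) * (φ1 * rot ^ j.val)
        rw [mul_assoc, ← mul_assoc (rot ^ i.val), conj_pow, ← mul_assoc, ← mul_assoc, hφφ,
          one_mul, ← pow_add]
        refine rot_eq_of ?_
        push_cast [ZMod.natCast_val, ZMod.cast_id]
        have h30 : (3 : ZMod 3) = 0 := by decide
        linear_combination (-i) * h30)

lemma π_r (i : ZMod 3) : π (DihedralGroup.r i) = rot ^ i.val := rfl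
lemma π_sr (i : ZMod 3) : π (DihedralGroup.sr i) = φ1 * rot ^ i.val := rfl

lemma π_inj : Function.Injective π := by
  rw [injective_iff_map_eq_one]
  rintro (i | i) h
  · have hlt : i.val < 3 := ZMod.val_lt i
    have h3 : i.val = 0 ∨ i.val = 1 ∨ i.val = 2 := by omega
    rw [π_r] at h
    rcases h3 with h3 | h3 | h3
    · have : i = 0 := (ZMod.val_eq_zero i).mp h3
      rw [this]; rfl
    · rw [h3, pow_one] at h
      exact absurd h ne1_rot
    · rw [h3, pow_two] at h
      exact absurd h ne1_rot2
  · have hlt : i.val < 3 := ZMod.val_lt i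
    have h3 : i.val = 0 ∨ i.val = 1 ∨ i.val = 2 := by omega
    rw [π_sr] at h
    rcases h3 with h3 | h3 | h3
    · rw [h3, pow_zero, mul_one] at h
      exact absurd h ne1_φ1
    · rw [h3, pow_one] at h
      exact absurd h ne1_φ1rot
    · rw [h3, pow_two] at h
      exact absurd h ne1_φ1rot2

lemma rot_eq_mul : rot = φ1 * φ2 := by
  rw [φ2, ← mul_assoc, hφφ, one_mul]

lemma range_eq : π.range = Subgroup.closure {φ1, φ2} := by
  apply le_antisymm
  · rintro f ⟨d, rfl⟩
    have hφ1m : φ1 ∈ Subgroup.closure {φ1, φ2} := Subgroup.subset_closure (by simp)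
    have hφ2m : φ2 ∈ Subgroup.closure {φ1, φ2} := Subgroup.subset_closure (by simp)
    have hrotm : rot ∈ Subgroup.closure {φ1, φ2} := by
      rw [rot_eq_mul]; exact mul_mem hφ1m hφ2m
    cases d with
    | r i => rw [π_r]; exact pow_mem hrotm _
    | sr i => rw [π_sr]; exact mul_mem hφ1m (pow_mem hrotm _)
  · rw [Subgroup.closure_le]
    rintro f (rfl | rfl)
    · exact ⟨DihedralGroup.sr 0, by rw [π_sr, ZMod.val_zero, pow_zero, mul_one]⟩
    · refine ⟨DihedralGroup.sr 1, ?_⟩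
      rw [π_sr, ZMod.val_one, pow_one, φ2]

end Krew

theorem kreweras_group_order_six :
    ∃ φ₁ φ₂ : RingAut K2,
      φ₁ (X2 0) = (X2 0 * X2 1)⁻¹ ∧ φ₁ (X2 1) = X2 1 ∧
      φ₂ (X2 0) = X2 0 ∧ φ₂ (X2 1) = (X2 0 * X2 1)⁻¹ ∧
      Nat.card (Subgroup.closure {φ₁, φ₂} : Subgroup (RingAut K2)) = 6 := by
  refine ⟨Krew.φ1, Krew.φ2, Krew.vφ0, Krew.vφ1, Krew.vφ2_0, Krew.vφ2_1, ?_⟩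
  rw [← Krew.range_eq]
  have e : DihedralGroup 3 ≃* Krew.π.range := MonoidHom.ofInjective Krew.π_inj
  rw [← Nat.card_congr e.toEquiv, Nat.card_eq_fintype_card, DihedralGroup.card]
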